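/- For every positive integer d, the set E_d is an open subset of ℝ². -/

import Mathlib

noncomputable section

open Set

/-- First polynomial of the Haas system with parameters `(a, b, d)`. -/
def h₁ (a : ℝ) (d : ℕ) (x y : ℝ) : ℝ := x ^ (2 * d) + a * y ^ d - y

/-- Second polynomial of the Haas system with parameters `(a, b, d)`. -/
def h₂ (b : ℝ) (d : ℕ) (x y : ℝ) : ℝ := y ^ (2 * d) + b * x ^ d - x

/-- The Jacobian matrix of the Haas system `(h₁, h₂)` at `(x, y)`. -/
def haasJac (a b : ℝ) (d : ℕ) (x y : ℝ) : Matrix (Fin 2) (Fin 2) ℝ :=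
  !![2 * (d : ℝ) * x ^ (2 * d - 1), a * (d : ℝ) * y ^ (d - 1) - 1;
     b * (d : ℝ) * x ^ (d - 1) - 1, 2 * (d : ℝ) * y ^ (2 * d - 1)]

/-- `p` is a nondegenerate positive root of the Haas system `H_{(a,b,d)}`. -/
def IsNondegPosRoot (a b : ℝ) (d : ℕ) (p : ℝ × ℝ) : Prop :=
  0 < p.1 ∧ 0 < p.2 ∧ h₁ a d p.1 p.2 = 0 ∧ h₂ b d p.1 p.2 = 0 ∧
    IsUnit (haasJac a b d p.1 p.2)

/-- `E d` is the set of parameter pairs `(a, b)` for which the Haas system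
`H_{(a,b,d)}` has at least 5 nondegenerate positive roots. -/
def E (d : ℕ) : Set (ℝ × ℝ) :=
  {q | 5 ≤ {p : ℝ × ℝ | IsNondegPosRoot q.1 q.2 d p}.encard}

/-! ### Auxiliary material -/

abbrev HaasW := (ℝ × ℝ) × (ℝ × ℝ)

/-- The combined map `(q, p) ↦ (q, H(q,p))`. -/
def HaasΦ (d : ℕ) (w : HaasW) : HaasW :=
  (w.1, (h₁ w.1.1 d w.2.1 w.2.2, h₂ w.1.2 d w.2.1 w.2.2))

def haasFwdL (α β γ δ c₁ c₂ : ℝ) : HaasW →ₗ[ℝ] HaasW where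
  toFun w := (w.1, (c₁ * w.1.1 + α * w.2.1 + β * w.2.2, c₂ * w.1.2 + γ * w.2.1 + δ * w.2.2))
  map_add' u v := by ext <;> simp <;> ring
  map_smul' c u := by ext <;> simp <;> ring

def haasBwdL (α β γ δ c₁ c₂ : ℝ) : HaasW →ₗ[ℝ] HaasW where
  toFun w := (w.1,
    ((δ * (w.2.1 - c₁ * w.1.1) - β * (w.2.2 - c₂ * w.1.2)) / (α * δ - β * γ),
     (α * (w.2.2 - c₂ * w.1.2) - γ * (w.2.1 - c₁ * w.1.1)) / (α * δ - β * γ)))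
  map_add' u v := by ext <;> simp <;> ring
  map_smul' c u := by ext <;> simp <;> ring

def haasCLE (α β γ δ c₁ c₂ : ℝ) (hD : α * δ - β * γ ≠ 0) : HaasW ≃L[ℝ] HaasW :=
  ContinuousLinearEquiv.equivOfInverse
    (LinearMap.toContinuousLinearMap (haasFwdL α β γ δ c₁ c₂))
    (LinearMap.toContinuousLinearMap (haasBwdL α β γ δ c₁ c₂))
    (fun w => by ext <;> simp [haasFwdL, haasBwdL] <;> grind)
    (fun w => by ext <;> simp [haasFwdL, haasBwdL] <;> grind)

def haasPa : HaasW →L[ℝ] ℝ :=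
  (ContinuousLinearMap.fst ℝ ℝ ℝ).comp (ContinuousLinearMap.fst ℝ (ℝ×ℝ) (ℝ×ℝ))
def haasPb : HaasW →L[ℝ] ℝ :=
  (ContinuousLinearMap.snd ℝ ℝ ℝ).comp (ContinuousLinearMap.fst ℝ (ℝ×ℝ) (ℝ×ℝ))
def haasPx : HaasW →L[ℝ] ℝ :=
  (ContinuousLinearMap.fst ℝ ℝ ℝ).comp (ContinuousLinearMap.snd ℝ (ℝ×ℝ) (ℝ×ℝ))
def haasPy : HaasW →L[ℝ] ℝ :=
  (ContinuousLinearMap.snd ℝ ℝ ℝ).comp (ContinuousLinearMap.snd ℝ (ℝ×ℝ) (ℝ×ℝ))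

theorem haasHf₁ (w₀ : HaasW) (d : ℕ) :
    HasStrictFDerivAt (fun w : HaasW => h₁ w.1.1 d w.2.1 w.2.2)
    ((((2*d : ℕ) : ℝ) * w₀.2.1 ^ (2*d-1)) • haasPx +
      (w₀.1.1 • (((d:ℝ) * w₀.2.2 ^ (d-1)) • haasPy) + (w₀.2.2 ^ d) • haasPa) - haasPy) w₀ := by
  have hx : HasStrictFDerivAt (fun w : HaasW => w.2.1) haasPx w₀ := haasPx.hasStrictFDerivAt
  have hy : HasStrictFDerivAt (fun w : HaasW => w.2.2) haasPy w₀ := haasPy.hasStrictFDerivAt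
  have ha : HasStrictFDerivAt (fun w : HaasW => w.1.1) haasPa w₀ := haasPa.hasStrictFDerivAt
  have hxp : HasStrictFDerivAt (fun w : HaasW => w.2.1 ^ (2*d))
      ((((2*d : ℕ) : ℝ) * w₀.2.1 ^ (2*d-1)) • haasPx) w₀ :=
    (hasStrictDerivAt_pow (2*d) w₀.2.1).comp_hasStrictFDerivAt w₀ hx
  have hyp : HasStrictFDerivAt (fun w : HaasW => w.2.2 ^ d)
      (((d:ℝ) * w₀.2.2 ^ (d-1)) • haasPy) w₀ :=
    (hasStrictDerivAt_pow d w₀.2.2).comp_hasStrictFDerivAt w₀ hy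
  exact (hxp.add (ha.mul hyp)).sub hy

theorem haasHf₂ (w₀ : HaasW) (d : ℕ) :
    HasStrictFDerivAt (fun w : HaasW => h₂ w.1.2 d w.2.1 w.2.2)
    ((((2*d : ℕ) : ℝ) * w₀.2.2 ^ (2*d-1)) • haasPy +
      (w₀.1.2 • (((d:ℝ) * w₀.2.1 ^ (d-1)) • haasPx) + (w₀.2.1 ^ d) • haasPb) - haasPx) w₀ := by
  have hx : HasStrictFDerivAt (fun w : HaasW => w.2.1) haasPx w₀ := haasPx.hasStrictFDerivAt
  have hy : HasStrictFDerivAt (fun w : HaasW => w.2.2) haasPy w₀ := haasPy.hasStrictFDerivAt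
  have hb : HasStrictFDerivAt (fun w : HaasW => w.1.2) haasPb w₀ := haasPb.hasStrictFDerivAt
  have hxp : HasStrictFDerivAt (fun w : HaasW => w.2.1 ^ d)
      (((d:ℝ) * w₀.2.1 ^ (d-1)) • haasPx) w₀ :=
    (hasStrictDerivAt_pow d w₀.2.1).comp_hasStrictFDerivAt w₀ hx
  have hyp : HasStrictFDerivAt (fun w : HaasW => w.2.2 ^ (2*d))
      ((((2*d : ℕ) : ℝ) * w₀.2.2 ^ (2*d-1)) • haasPy) w₀ :=
    (hasStrictDerivAt_pow (2*d) w₀.2.2).comp_hasStrictFDerivAt w₀ hy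
  exact (hyp.add (hb.mul hxp)).sub hx

theorem haasΦderiv (d : ℕ) (w₀ : HaasW)
    (hD : (2*(d:ℝ) * w₀.2.1 ^ (2*d-1)) * (2*(d:ℝ) * w₀.2.2 ^ (2*d-1))
        - (w₀.1.1 * d * w₀.2.2 ^ (d-1) - 1) * (w₀.1.2 * d * w₀.2.1 ^ (d-1) - 1) ≠ 0) :
    HasStrictFDerivAt (HaasΦ d)
      (haasCLE (2*(d:ℝ) * w₀.2.1 ^ (2*d-1)) (w₀.1.1 * d * w₀.2.2 ^ (d-1) - 1)
        (w₀.1.2 * d * w₀.2.1 ^ (d-1) - 1) (2*(d:ℝ) * w₀.2.2 ^ (2*d-1))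
        (w₀.2.2 ^ d) (w₀.2.1 ^ d) hD : HaasW →L[ℝ] HaasW) w₀ := by
  have hfst : HasStrictFDerivAt (fun w : HaasW => w.1)
      (ContinuousLinearMap.fst ℝ (ℝ×ℝ) (ℝ×ℝ)) w₀ :=
    (ContinuousLinearMap.fst ℝ (ℝ×ℝ) (ℝ×ℝ)).hasStrictFDerivAt
  have hcomb := hfst.prodMk ((haasHf₁ w₀ d).prodMk (haasHf₂ w₀ d))
  refine hcomb.congr_fderiv ?_
  ext <;>
    simp [haasCLE, haasFwdL, haasPa, haasPb, haasPx, haasPy, h₁, h₂, HaasΦ] <;> push_cast <;> ring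

theorem isUnit_haasJac_iff (a b : ℝ) (d : ℕ) (x y : ℝ) :
    IsUnit (haasJac a b d x y) ↔
      (2*(d:ℝ) * x ^ (2*d-1)) * (2*(d:ℝ) * y ^ (2*d-1))
        - (a * d * y ^ (d-1) - 1) * (b * d * x ^ (d-1) - 1) ≠ 0 := by
  rw [Matrix.isUnit_iff_isUnit_det, isUnit_iff_ne_zero, haasJac, Matrix.det_fin_two_of]

/-- determinant of the Jacobian as a function on `HaasW`. -/
def haasDetF (d : ℕ) (w : HaasW) : ℝ :=
  (2*(d:ℝ) * w.2.1 ^ (2*d-1)) * (2*(d:ℝ) * w.2.2 ^ (2*d-1))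
    - (w.1.1 * d * w.2.2 ^ (d-1) - 1) * (w.1.2 * d * w.2.1 ^ (d-1) - 1)

theorem haasDetF_continuous (d : ℕ) : Continuous (haasDetF d) := by
  unfold haasDetF; fun_prop

/-- Persistence of a nondegenerate positive root under perturbation of parameters. -/
theorem haas_persist (d : ℕ) (a b : ℝ) (p₀ : ℝ × ℝ) (h : IsNondegPosRoot a b d p₀)
    {ε : ℝ} (hε : 0 < ε) :
    ∀ᶠ q : ℝ × ℝ in nhds (a, b), ∃ p, IsNondegPosRoot q.1 q.2 d p ∧ dist p p₀ < ε := by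
  obtain ⟨hx, hy, he1, he2, hu⟩ := h
  set w₀ : HaasW := ((a, b), p₀) with hw₀
  have hD : haasDetF d w₀ ≠ 0 := by
    rw [isUnit_haasJac_iff] at hu
    simpa [haasDetF, hw₀] using hu
  have hΦ := haasΦderiv d w₀ hD
  set g := hΦ.localInverse (HaasΦ d) _ w₀ with hg
  have hgc : ContinuousAt g (HaasΦ d w₀) := hΦ.localInverse_continuousAt
  have hgw : g (HaasΦ d w₀) = w₀ := hΦ.localInverse_apply_image
  have hri : ∀ᶠ v in nhds (HaasΦ d w₀), HaasΦ d (g v) = v := hΦ.eventually_right_inverse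
  have hΦw₀ : HaasΦ d w₀ = ((a, b), ((0:ℝ), (0:ℝ))) := by
    simp [HaasΦ, hw₀, he1, he2]
  have hι : Filter.Tendsto (fun q : ℝ × ℝ => (q, ((0:ℝ), (0:ℝ)))) (nhds (a, b))
      (nhds (HaasΦ d w₀)) := by
    rw [hΦw₀]
    exact (continuous_id.prodMk continuous_const).tendsto (a, b)
  have hr : Filter.Tendsto (fun q : ℝ × ℝ => g (q, ((0:ℝ), (0:ℝ)))) (nhds (a, b)) (nhds w₀) := by
    have := hgc.tendsto
    rw [hgw] at this
    exact this.comp hι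
  have E1 : ∀ᶠ q : ℝ × ℝ in nhds (a, b), HaasΦ d (g (q, ((0:ℝ),(0:ℝ)))) = (q, ((0:ℝ),(0:ℝ))) :=
    hι.eventually hri
  have O1 : ∀ᶠ w : HaasW in nhds w₀, 0 < w.2.1 :=
    (isOpen_lt continuous_const (continuous_fst.comp continuous_snd)).mem_nhds hx
  have O2 : ∀ᶠ w : HaasW in nhds w₀, 0 < w.2.2 :=
    (isOpen_lt continuous_const (continuous_snd.comp continuous_snd)).mem_nhds hy
  have O3 : ∀ᶠ w : HaasW in nhds w₀, haasDetF d w ≠ 0 :=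
    (isOpen_compl_singleton.preimage (haasDetF_continuous d)).mem_nhds hD
  have E2 := hr.eventually O1
  have E3 := hr.eventually O2
  have E4 := hr.eventually O3
  have hr2 : Filter.Tendsto (fun q : ℝ × ℝ => (g (q, ((0:ℝ), (0:ℝ)))).2) (nhds (a, b))
      (nhds p₀) := (continuous_snd.tendsto w₀).comp hr
  have E5 : ∀ᶠ q : ℝ × ℝ in nhds (a, b), dist (g (q, ((0:ℝ),(0:ℝ)))).2 p₀ < ε :=
    hr2 (Metric.ball_mem_nhds p₀ hε)
  filter_upwards [E1, E2, E3, E4, E5] with q h1 h2 h3 h4 h5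
  set w := g (q, ((0:ℝ), (0:ℝ))) with hw
  have hw1 : w.1 = q := congrArg Prod.fst h1
  have hpair : (h₁ w.1.1 d w.2.1 w.2.2, h₂ w.1.2 d w.2.1 w.2.2) = ((0:ℝ), (0:ℝ)) :=
    congrArg Prod.snd h1
  refine ⟨w.2, ⟨h2, h3, ?_, ?_, ?_⟩, h5⟩
  · have := congrArg Prod.fst hpair
    rw [← hw1]; exact this
  · have := congrArg Prod.snd hpair
    rw [← hw1]; exact this
  · rw [isUnit_haasJac_iff, ← hw1]
    exact h4

/-- For every positive integer `d`, the set `E d` is open. -/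
theorem E_isOpen : ∀ d : ℕ, 0 < d → IsOpen (E d) := by
  intro d _
  rw [isOpen_iff_mem_nhds]
  intro q₀ hq₀
  have hq₀' : (5 : ℕ∞) ≤ {p : ℝ × ℝ | IsNondegPosRoot q₀.1 q₀.2 d p}.encard := hq₀
  obtain ⟨t, hts, htcard⟩ := Set.exists_subset_encard_eq hq₀'
  have htfin : t.Finite := Set.finite_of_encard_eq_coe (k := 5) (by exact_mod_cast htcard)
  set s : Finset (ℝ × ℝ) := htfin.toFinset with hs
  have hscoe : (↑s : Set (ℝ × ℝ)) = t := htfin.coe_toFinset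
  have hcard : s.card = 5 := by
    have := htfin.encard_eq_coe_toFinset_card
    rw [htcard] at this
    exact_mod_cast this.symm
  have h2card : 1 < s.card := by omega
  obtain ⟨u, hu, v, hv, huv⟩ := Finset.one_lt_card.mp h2card
  have hne : s.offDiag.Nonempty := ⟨(u, v), Finset.mem_offDiag.mpr ⟨hu, hv, huv⟩⟩
  set m : ℝ := s.offDiag.inf' hne (fun pr => dist pr.1 pr.2) with hm
  have hmpos : 0 < m := by
    rw [hm, Finset.lt_inf'_iff]
    rintro ⟨p₁, p₂⟩ hp
    obtain ⟨-, -, hne12⟩ := Finset.mem_offDiag.mp hp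
    exact dist_pos.mpr hne12
  have hε : 0 < m / 2 := by linarith
  have hev : ∀ᶠ q : ℝ × ℝ in nhds q₀, ∀ p ∈ s,
      ∃ p', IsNondegPosRoot q.1 q.2 d p' ∧ dist p' p < m / 2 := by
    rw [Filter.eventually_all_finset]
    intro p hp
    have hroot : IsNondegPosRoot q₀.1 q₀.2 d p := hts (hscoe ▸ Finset.mem_coe.mpr hp)
    simpa using haas_persist d q₀.1 q₀.2 p hroot hε
  have hfinal : ∀ᶠ q : ℝ × ℝ in nhds q₀, q ∈ E d := by
    filter_upwards [hev] with q hq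
    have hq' : ∀ p : {p // p ∈ s}, ∃ p',
        IsNondegPosRoot q.1 q.2 d p' ∧ dist p' (p : ℝ × ℝ) < m / 2 :=
      fun p => hq p p.2
    choose f hf1 hf2 using hq'
    have hinj : Function.Injective f := by
      intro i j hij
      by_contra hne'
      have hneij : (i : ℝ × ℝ) ≠ (j : ℝ × ℝ) := fun h => hne' (Subtype.ext h)
      have hmem : ((i : ℝ × ℝ), (j : ℝ × ℝ)) ∈ s.offDiag :=
        Finset.mem_offDiag.mpr ⟨i.2, j.2, hneij⟩
      have hle : m ≤ dist (i : ℝ × ℝ) (j : ℝ × ℝ) := Finset.inf'_le _ hmem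
      have : dist (i : ℝ × ℝ) (j : ℝ × ℝ) < m := by
        calc dist (i : ℝ × ℝ) (j : ℝ × ℝ)
            ≤ dist (i : ℝ × ℝ) (f i) + dist (f j) (j : ℝ × ℝ) := by
              rw [hij]; exact dist_triangle _ _ _
          _ < m / 2 + m / 2 := by
              have h1 := hf2 i; have h2 := hf2 j
              rw [dist_comm] at h1
              exact add_lt_add h1 h2
          _ = m := by ring
      linarith
    have hsub : Set.range f ⊆ {p : ℝ × ℝ | IsNondegPosRoot q.1 q.2 d p} :=
      Set.range_subset_iff.mpr fun i => hf1 i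
    have hrange : (Set.range f).encard = 5 := by
      rw [← Set.image_univ, Set.InjOn.encard_image (hinj.injOn)]
      rw [Set.encard_univ]
      simp [ENat.card_eq_coe_fintype_card, hcard]
    show (5 : ℕ∞) ≤ _
    calc (5 : ℕ∞) = (Set.range f).encard := hrange.symm
      _ ≤ _ := Set.encard_le_encard hsub
  simpa using hfinal
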